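/- The function ρ̂₂(α,β), defined as 2 + 2β − 4α/(2−β) for β ≤ 2−√(2α) and 6 − 4√(2α) for β ≥ 2−√(2α), is well-defined (the two branches agree at β = 2−√(2α)), and for every α ∈ (0,1) and β ∈ (0,1) one has ρ̂₂(α,β) ≥ ρ₂(α,β), consistent with annealed exponents dominating quenched ones. -/

import Mathlib

open Set

/-- The pair-correlation exponent `ρ₂(α,β)`. -/
noncomputable def rho2 (α β : ℝ) : ℝ :=
  if β ≤ 2 * (1 - Real.sqrt α) then 2 + 2 * β - 4 * α / (2 - β)
  else 8 * (1 - Real.sqrt α) - 4 * (1 - Real.sqrt α) ^ 2 / β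

/-- The annealed pair-correlation exponent `ρ̂₂(α,β)`. -/
noncomputable def rhoHat2 (α β : ℝ) : ℝ :=
  if β ≤ 2 - Real.sqrt (2 * α) then 2 + 2 * β - 4 * α / (2 - β)
  else 6 - 4 * Real.sqrt (2 * α)

theorem statement_19 (α : ℝ) (hα : α ∈ Ioo (0 : ℝ) 1) :
    (2 + 2 * (2 - Real.sqrt (2 * α)) - 4 * α / (2 - (2 - Real.sqrt (2 * α)))
        = 6 - 4 * Real.sqrt (2 * α)) ∧
    (∀ β ∈ Ioo (0 : ℝ) 1, rho2 α β ≤ rhoHat2 α β) := by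
  obtain ⟨hα0, hα1⟩ := hα
  set a := Real.sqrt α with ha
  set s := Real.sqrt (2 * α) with hs
  have ha0 : 0 < a := Real.sqrt_pos.mpr hα0
  have hs0 : 0 < s := Real.sqrt_pos.mpr (by linarith)
  have ha2 : a ^ 2 = α := Real.sq_sqrt hα0.le
  have hs2 : s ^ 2 = 2 * α := Real.sq_sqrt (by linarith)
  have ha1 : a < 1 := by
    nlinarith [sq_nonneg (a - 1)]
  have hsa : s < 2 * a := by
    nlinarith [sq_nonneg (s - 2 * a), sq_nonneg (s + 2 * a)]
  constructor
  · field_simp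
    simp only [sub_sub_cancel]
    have h4 : 4 * α / s = 2 * s := by rw [div_eq_iff hs0.ne']; nlinarith
    nlinarith
  · intro β ⟨hβ0, hβ1⟩
    have h2β : 0 < 2 - β := by linarith
    unfold rho2 rhoHat2
    rw [← ha, ← hs]
    by_cases h1 : β ≤ 2 * (1 - a)
    · have h2 : β ≤ 2 - s := by linarith
      rw [if_pos h1, if_pos h2]
    · rw [if_neg h1]
      have hβt : 2 * (1 - a) < β := lt_of_not_ge h1
      by_cases h2 : β ≤ 2 - s
      · rw [if_pos h2]
        rw [← sub_nonneg, ← ha2]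
        have key : (2 + 2 * β - 4 * a ^ 2 / (2 - β)) - (8 * (1 - a) - 4 * (1 - a) ^ 2 / β)
            = (2 * (1 - β) * (β - 2 * (1 - a)) ^ 2) / (β * (2 - β)) := by
          field_simp
          ring
        rw [key]
        apply div_nonneg (by nlinarith [sq_nonneg (β - 2 * (1 - a))]) (by positivity)
      · rw [if_neg h2]
        have hβs : 2 - s < β := lt_of_not_ge h2
        rw [← sub_nonneg]
        have key : (6 - 4 * s) - (8 * (1 - a) - 4 * (1 - a) ^ 2 / β)
            = ((6 - 4 * s) * β - (8 * (1 - a) * β - 4 * (1 - a) ^ 2)) / β := by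
          field_simp
        rw [key]
        apply div_nonneg _ hβ0.le
        rcases le_or_gt (2 - 8 * a + 4 * s) 0 with hc | hc
        · nlinarith
        · nlinarith [sq_nonneg (s - 1), mul_nonneg hc.le (sub_nonneg.mpr hβ1.le)]
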